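/- Let K = R^T R be the Cholesky factorization of an m×m real positive definite matrix K, λ > 0, and let p ⪰ 0 be an m×m real symmetric positive semidefinite matrix. Then X = (1/(2λ)) R^T ((I_m + 4λ R^{-T} p R^{-1})^{1/2} − I_m) R is symmetric positive semidefinite and satisfies X + λ X K^{-1} X = p. -/

import Mathlib

open Matrix

private lemma psd_smul {n : ℕ} {c : ℝ} (hc : 0 ≤ c) {A : Matrix (Fin n) (Fin n) ℝ}
    (hA : A.PosSemidef) : (c • A).PosSemidef := by
  refine ⟨?_, fun x => ?_⟩
  · unfold Matrix.IsHermitian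
    rw [conjTranspose_smul, hA.1]
    simp
  · exact (hA.smul hc).2 x

open scoped MatrixOrder in
private lemma psd_sub_one {n : ℕ} {Q : Matrix (Fin n) (Fin n) ℝ} (hQ : Q.PosSemidef)
    (hM : (Q * Q - 1).PosSemidef) : (Q - 1).PosSemidef := by
  set A := CFC.sqrt Q with hAdef
  have hA : A.PosSemidef := Matrix.nonneg_iff_posSemidef.mp (CFC.sqrt_nonneg Q)
  have hAA : A * A = Q := CFC.sqrt_mul_sqrt_self Q (Matrix.nonneg_iff_posSemidef.mpr hQ)
  have hS : (Q + 1).PosDef := Matrix.PosDef.posSemidef_add hQ Matrix.PosDef.one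
  have hSunit : IsUnit (Q + 1).det := (Matrix.isUnit_iff_isUnit_det _).mp hS.isUnit
  -- key identity: (Q+1)(Q-1)(Q+1) = (Q*Q-1) + A*(Q*Q-1)*A
  have key : (Q + 1) * (Q - 1) * (Q + 1) = (Q * Q - 1) + A * (Q * Q - 1) * A := by
    rw [← hAA]; noncomm_ring
  have hAMA : (A * (Q * Q - 1) * A).PosSemidef := by
    have := hM.mul_mul_conjTranspose_same A
    rwa [show Aᴴ = A from hA.1] at this
  have hN : ((Q + 1) * (Q - 1) * (Q + 1)).PosSemidef := by
    rw [key]; exact hM.add hAMA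
  have hconj := hN.conjTranspose_mul_mul_same (Q + 1)⁻¹
  have hSinvH : ((Q + 1)⁻¹)ᴴ = (Q + 1)⁻¹ := hS.isHermitian.inv
  have h1 : (Q + 1)⁻¹ * (Q + 1) = 1 := Matrix.nonsing_inv_mul _ hSunit
  have h2 : (Q + 1) * (Q + 1)⁻¹ = 1 := Matrix.mul_nonsing_inv _ hSunit
  have : ((Q + 1)⁻¹)ᴴ * ((Q + 1) * (Q - 1) * (Q + 1)) * (Q + 1)⁻¹ = Q - 1 := by
    rw [hSinvH]
    simp only [Matrix.mul_assoc]
    rw [h2, Matrix.mul_one, ← Matrix.mul_assoc, h1, Matrix.one_mul]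
  rwa [this] at hconj

/-- Regularized Picard update solves the quadratic equation: with `K = Rᵀ R ≻ 0`,
`λ > 0`, `p ⪰ 0`, and `Q` the positive semidefinite square root of
`I + 4λ R⁻ᵀ p R⁻¹`, the matrix `X = (1/(2λ)) Rᵀ (Q − I) R` is positive
semidefinite and satisfies `X + λ X K⁻¹ X = p`. -/
theorem picard_update_solves_quadratic {m : ℕ}
    (R p Q : Matrix (Fin m) (Fin m) ℝ) (hR : IsUnit R.det)
    (hK : (Rᵀ * R).PosDef) (l : ℝ) (hl : 0 < l)
    (hp : p.PosSemidef) (hQ : Q.PosSemidef)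
    (hQsq : Q * Q = 1 + (4 * l) • ((R⁻¹)ᵀ * p * R⁻¹)) :
    letI X : Matrix (Fin m) (Fin m) ℝ := (1 / (2 * l)) • (Rᵀ * (Q - 1) * R)
    X.PosSemidef ∧ X + l • (X * (Rᵀ * R)⁻¹ * X) = p := by
  have h1 : R * R⁻¹ = 1 := Matrix.mul_nonsing_inv R hR
  have h2 : R⁻¹ * R = 1 := Matrix.nonsing_inv_mul R hR
  have hM : (Q * Q - 1).PosSemidef := by
    rw [hQsq, add_sub_cancel_left]
    have := hp.conjTranspose_mul_mul_same R⁻¹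
    rw [conjTranspose_eq_transpose_of_trivial] at this
    exact psd_smul (by positivity) this
  have hD : (Q - 1).PosSemidef := psd_sub_one hQ hM
  have hT : (Rᵀ * (Q - 1) * R).PosSemidef := by
    have := hD.conjTranspose_mul_mul_same R
    rwa [conjTranspose_eq_transpose_of_trivial] at this
  constructor
  · exact psd_smul (by positivity) hT
  · -- algebra
    have hKinv : (Rᵀ * R)⁻¹ = R⁻¹ * (R⁻¹)ᵀ := by
      rw [Matrix.mul_inv_rev, Matrix.transpose_nonsing_inv]
    have hcancel1 : (R⁻¹)ᵀ * Rᵀ = 1 := by rw [← transpose_mul, h1, transpose_one]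
    have hcancel2 : Rᵀ * (R⁻¹)ᵀ = 1 := by rw [← transpose_mul, h2, transpose_one]
    have hmid : Rᵀ * (Q - 1) * R * (R⁻¹ * (R⁻¹)ᵀ) * (Rᵀ * (Q - 1) * R)
        = Rᵀ * ((Q - 1) * (Q - 1)) * R := by
      simp only [Matrix.mul_assoc]
      rw [← Matrix.mul_assoc R R⁻¹, h1, Matrix.one_mul,
        ← Matrix.mul_assoc (R⁻¹)ᵀ Rᵀ, hcancel1, Matrix.one_mul]
    have hDD : (Q - 1) * (Q - 1) = (4 * l) • ((R⁻¹)ᵀ * p * R⁻¹) - (2 : ℝ) • (Q - 1) := by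
      have e1 : (Q - 1) * (Q - 1) = Q * Q - (2 : ℝ) • Q + 1 := by
        have : ((2:ℝ) • Q : Matrix (Fin m) (Fin m) ℝ) = Q + Q := two_smul ℝ Q
        rw [this]; noncomm_ring
      rw [e1, hQsq]
      module
    have hmid2 : Rᵀ * ((Q - 1) * (Q - 1)) * R
        = (4 * l) • p - (2 : ℝ) • (Rᵀ * (Q - 1) * R) := by
      rw [hDD, Matrix.mul_sub, Matrix.sub_mul]
      simp only [Matrix.mul_smul, Matrix.smul_mul]
      congr 2
      rw [← Matrix.mul_assoc, ← Matrix.mul_assoc, hcancel2, Matrix.one_mul,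
        Matrix.mul_assoc, h2, Matrix.mul_one]
    show (1 / (2 * l)) • (Rᵀ * (Q - 1) * R)
        + l • ((1 / (2 * l)) • (Rᵀ * (Q - 1) * R) * (Rᵀ * R)⁻¹
          * ((1 / (2 * l)) • (Rᵀ * (Q - 1) * R))) = p
    rw [hKinv, Matrix.smul_mul, Matrix.smul_mul, Matrix.mul_smul, hmid, hmid2]
    have hl' : l ≠ 0 := ne_of_gt hl
    match_scalars <;> field_simp <;> ring
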